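/- arXiv:1804.00059 — 2 statements merged into one kernel-verified Lean document; each statement's English description precedes it below -/
import Mathlib

section
/- Let ω be a primitive n-th root of unity in a field F of characteristic 0. If f(z) = ωz + Σ aₖzᵏ and g(z) = ωz + Σ bₖzᵏ both have compositional order n and aₖ = bₖ for all k with k ≢ 1 (mod n), then f = g. -/
open PowerSeries

/-- Composition (substitution) of formal power series: coefficient formula,
valid for `g` with zero constant term. -/
noncomputable def PS.comp {F : Type*} [CommRing F] (f g : PowerSeries F) : PowerSeries F :=
  PowerSeries.mk fun k =>
    ∑ n ∈ Finset.range (k + 1), (PowerSeries.coeff (R := F) n f) * (PowerSeries.coeff (R := F) k (g ^ n))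

/-- The group `G` of series with zero constant term and nonzero linear coefficient. -/
def PS.G (F : Type*) [CommRing F] : Set (PowerSeries F) :=
  {f | PowerSeries.constantCoeff (R := F) f = 0 ∧ PowerSeries.coeff (R := F) 1 f ≠ 0}

/-- `n`-fold compositional iterate of `f`. -/
noncomputable def PS.iter {F : Type*} [CommRing F] (f : PowerSeries F) : ℕ → PowerSeries F
  | 0 => PowerSeries.X
  | n + 1 => PS.comp f (PS.iter f n)

/-- `f` has compositional order exactly `n`. -/
def PS.HasOrder {F : Type*} [CommRing F] (f : PowerSeries F) (n : ℕ) : Prop :=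
  PS.iter f n = PowerSeries.X ∧ ∀ m, 0 < m → m < n → PS.iter f m ≠ PowerSeries.X

namespace PSAux

variable {F : Type*} [CommRing F]

lemma coeff_comp (f g : PowerSeries F) (k : ℕ) :
    PowerSeries.coeff (R := F) k (PS.comp f g)
      = ∑ m ∈ Finset.range (k + 1),
          PowerSeries.coeff (R := F) m f * PowerSeries.coeff (R := F) k (g ^ m) := by
  simp [PS.comp]

lemma pow_congr {h h' : PowerSeries F} :
    ∀ (j a : ℕ), (∀ i ≤ a, coeff (R := F) i h = coeff (R := F) i h') →
      coeff (R := F) a (h ^ j) = coeff (R := F) a (h' ^ j) := by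
  intro j
  induction j with
  | zero => intro a _; simp
  | succ j ih =>
    intro a H
    rw [pow_succ, pow_succ, PowerSeries.coeff_mul, PowerSeries.coeff_mul]
    refine Finset.sum_congr rfl fun p hp => ?_
    rw [Finset.HasAntidiagonal.mem_antidiagonal] at hp
    rw [ih p.1 (fun i hi => H i (by omega)), H p.2 (by omega)]

lemma pow_congr' {h h' : PowerSeries F} (h0 : constantCoeff (R := F) h = 0)
    (h0' : constantCoeff (R := F) h' = 0) {k : ℕ}
    (H : ∀ i < k, coeff (R := F) i h = coeff (R := F) i h') {j : ℕ} (hj : 2 ≤ j) :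
    coeff (R := F) k (h ^ j) = coeff (R := F) k (h' ^ j) := by
  obtain ⟨m, rfl⟩ : ∃ m, j = m + 1 := ⟨j - 1, by omega⟩
  have hm : 0 < m := by omega
  rw [pow_succ, pow_succ, PowerSeries.coeff_mul, PowerSeries.coeff_mul]
  refine Finset.sum_congr rfl fun p hp => ?_
  rw [Finset.HasAntidiagonal.mem_antidiagonal] at hp
  rcases Nat.eq_zero_or_pos p.1 with h1 | h1
  · rw [h1, PowerSeries.coeff_zero_eq_constantCoeff, map_pow, map_pow, h0, h0',
      zero_pow hm.ne', zero_mul, zero_mul]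
  · rcases eq_or_lt_of_le (show p.1 ≤ k by omega) with hk1 | hk1
    · have h2 : p.2 = 0 := by omega
      rw [h2, PowerSeries.coeff_zero_eq_constantCoeff, h0, h0', mul_zero, mul_zero]
    · rw [pow_congr m p.1 (fun i hi => H i (lt_of_le_of_lt hi hk1)), H p.2 (by omega)]

lemma coeff_pow_lt {h : PowerSeries F} (h0 : constantCoeff (R := F) h = 0) {a j : ℕ}
    (haj : a < j) : coeff (R := F) a (h ^ j) = 0 := by
  have hX : PowerSeries.X ∣ h := PowerSeries.X_dvd_iff.2 h0
  exact PowerSeries.X_pow_dvd_iff.1 (pow_dvd_pow_of_dvd hX j) a haj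

lemma coeff_pow_self {h : PowerSeries F} (h0 : constantCoeff (R := F) h = 0) :
    ∀ k, coeff (R := F) k (h ^ k) = (coeff (R := F) 1 h) ^ k := by
  intro k
  induction k with
  | zero => simp
  | succ k ih =>
    rw [pow_succ, PowerSeries.coeff_mul, Finset.sum_eq_single (k, 1)]
    · rw [ih, pow_succ]
    · intro p hp hne
      rw [Finset.HasAntidiagonal.mem_antidiagonal] at hp
      rcases lt_trichotomy p.1 k with hlt | heq | hgt
      · rw [coeff_pow_lt h0 hlt, zero_mul]
      · exact absurd (Prod.ext heq (by omega)) hne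
      · have h2 : p.2 = 0 := by omega
        rw [h2, PowerSeries.coeff_zero_eq_constantCoeff, h0, mul_zero]
    · intro hmem
      exact absurd (Finset.HasAntidiagonal.mem_antidiagonal.2 (by simp)) hmem

lemma iter_constantCoeff {f : PowerSeries F} (hf0 : constantCoeff (R := F) f = 0) :
    ∀ m, constantCoeff (R := F) (PS.iter f m) = 0
  | 0 => by simp [PS.iter]
  | m + 1 => by
    rw [PS.iter, ← PowerSeries.coeff_zero_eq_constantCoeff, coeff_comp]
    simp [hf0]

lemma iter_coeff_one {f : PowerSeries F} {ω : F} (hf1 : coeff (R := F) 1 f = ω) :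
    ∀ m, coeff (R := F) 1 (PS.iter f m) = ω ^ m
  | 0 => by simp [PS.iter]
  | m + 1 => by
    rw [PS.iter, coeff_comp, Finset.sum_range_succ, Finset.sum_range_one]
    rw [pow_one, hf1, iter_coeff_one hf1 m]
    simp [pow_succ, mul_comm]

lemma iterA {f g : PowerSeries F} {k : ℕ} (H : ∀ j < k, coeff (R := F) j f = coeff (R := F) j g) :
    ∀ m, ∀ j < k, coeff (R := F) j (PS.iter f m) = coeff (R := F) j (PS.iter g m)
  | 0 => fun _ _ => rfl
  | m + 1 => by
    intro j hj
    rw [PS.iter, PS.iter, coeff_comp, coeff_comp]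
    refine Finset.sum_congr rfl fun i hi => ?_
    rw [Finset.mem_range] at hi
    rw [H i (by omega), pow_congr i j (fun l hl => iterA H m l (by omega))]

end PSAux

theorem stmt_13 (F : Type*) [Field F] [CharZero F] (n : ℕ) (hn : 0 < n) (ω : F)
    (hω : IsPrimitiveRoot ω n) (f g : PowerSeries F)
    (hf0 : PowerSeries.constantCoeff (R := F) f = 0) (hg0 : PowerSeries.constantCoeff (R := F) g = 0)
    (hf1 : PowerSeries.coeff (R := F) 1 f = ω) (hg1 : PowerSeries.coeff (R := F) 1 g = ω)
    (hordf : PS.HasOrder f n) (hordg : PS.HasOrder g n)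
    (hagree : ∀ k : ℕ, k % n ≠ 1 % n → PowerSeries.coeff (R := F) k f = PowerSeries.coeff (R := F) k g) :
    f = g := by
  apply PowerSeries.ext
  intro k
  induction k using Nat.strong_induction_on with
  | _ k ih =>
  by_cases hk : k % n = 1 % n
  swap
  · exact hagree k hk
  obtain rfl | rfl | hk2 : k = 0 ∨ k = 1 ∨ 2 ≤ k := by omega
  · rw [PowerSeries.coeff_zero_eq_constantCoeff, hf0, hg0]
  · rw [hf1, hg1]
  have key : ∀ a : ℕ, ω ^ a = ω ^ (a % n) := by
    intro a
    conv_lhs => rw [← Nat.div_add_mod a n]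
    rw [pow_add, pow_mul, hω.pow_eq_one, one_pow, one_mul]
  have hωk : ω ^ k = ω := by
    rw [key k, hk, ← key 1, pow_one]
  set d : F := PowerSeries.coeff (R := F) k f - PowerSeries.coeff (R := F) k g with hd
  set S : ℕ → F := fun m => ∑ j ∈ Finset.range m, ω ^ (m - 1 - j) * (ω ^ k) ^ j with hS
  have hSrec : ∀ m, S (m + 1) = ω * S m + (ω ^ k) ^ m := by
    intro m
    simp only [hS]
    rw [Finset.sum_range_succ]
    have h1 : ∀ j ∈ Finset.range m,
        ω ^ (m + 1 - 1 - j) * (ω ^ k) ^ j = ω * (ω ^ (m - 1 - j) * (ω ^ k) ^ j) := by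
      intro j hj
      rw [Finset.mem_range] at hj
      have he : m + 1 - 1 - j = (m - 1 - j) + 1 := by omega
      rw [he, pow_succ]; ring
    rw [Finset.sum_congr rfl h1, ← Finset.mul_sum]
    have he2 : m + 1 - 1 - m = 0 := by omega
    rw [he2, pow_zero, one_mul]
  have hB : ∀ m, PowerSeries.coeff (R := F) k (PS.iter f m) - PowerSeries.coeff (R := F) k (PS.iter g m)
      = S m * d := by
    intro m
    induction m with
    | zero => simp [PS.iter, hS]
    | succ m ihm =>
      rw [show PS.iter f (m+1) = PS.comp f (PS.iter f m) from rfl,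
        show PS.iter g (m+1) = PS.comp g (PS.iter g m) from rfl,
        PSAux.coeff_comp, PSAux.coeff_comp, ← Finset.sum_sub_distrib]
      have hterm : ∀ j ∈ Finset.range (k + 1),
          PowerSeries.coeff (R := F) j f * PowerSeries.coeff (R := F) k ((PS.iter f m) ^ j)
            - PowerSeries.coeff (R := F) j g * PowerSeries.coeff (R := F) k ((PS.iter g m) ^ j)
          = (if j = 1 then ω * (S m * d) else 0) + (if j = k then (ω ^ k) ^ m * d else 0) := by
        intro j hj
        rw [Finset.mem_range] at hj
        rcases eq_or_ne j 1 with rfl | hj1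
        · rw [if_pos rfl, if_neg (by omega : (1:ℕ) ≠ k), add_zero, pow_one, pow_one,
            hf1, hg1, ← mul_sub, ihm]
        rcases eq_or_ne j k with rfl | hjk
        · rw [if_neg hj1, if_pos rfl, zero_add,
            PSAux.coeff_pow_self (PSAux.iter_constantCoeff hf0 m) j,
            PSAux.coeff_pow_self (PSAux.iter_constantCoeff hg0 m) j,
            PSAux.iter_coeff_one hf1 m, PSAux.iter_coeff_one hg1 m]
          have he : (ω ^ m) ^ j = (ω ^ j) ^ m := by
            rw [← pow_mul, ← pow_mul, mul_comm]
          rw [he, hd]; ring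
        · rw [if_neg hj1, if_neg hjk, add_zero]
          rcases Nat.eq_zero_or_pos j with rfl | hjpos
          · rw [PowerSeries.coeff_zero_eq_constantCoeff, hf0, hg0, zero_mul, zero_mul,
              sub_zero]
          · have h2j : 2 ≤ j := by omega
            have hjlt : j < k := by omega
            rw [ih j hjlt,
              PSAux.pow_congr' (PSAux.iter_constantCoeff hf0 m)
                (PSAux.iter_constantCoeff hg0 m)
                (fun i hi => PSAux.iterA (fun l hl => ih l hl) m i hi) h2j, sub_self]
      rw [Finset.sum_congr rfl hterm, Finset.sum_add_distrib,
        Finset.sum_ite_eq' (Finset.range (k + 1)) 1 (fun _ => ω * (S m * d)),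
        Finset.sum_ite_eq' (Finset.range (k + 1)) k (fun _ => (ω ^ k) ^ m * d),
        if_pos (Finset.mem_range.2 (by omega)), if_pos (Finset.mem_range.2 (by omega)),
        hSrec m]
      ring
  have hBn := hB n
  rw [hordf.1, hordg.1, sub_self] at hBn
  have hSn : S n = (n : F) * ω ^ (n - 1) := by
    simp only [hS]
    have h1 : ∀ j ∈ Finset.range n, ω ^ (n - 1 - j) * (ω ^ k) ^ j = ω ^ (n - 1) := by
      intro j hj
      rw [Finset.mem_range] at hj
      rw [hωk, ← pow_add]
      congr 1
      omega
    rw [Finset.sum_congr rfl h1, Finset.sum_const, Finset.card_range, nsmul_eq_mul]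
  have hS0 : S n ≠ 0 := by
    rw [hSn]
    exact mul_ne_zero (Nat.cast_ne_zero.2 hn.ne') (pow_ne_zero _ (hω.ne_zero hn.ne'))
  have hd0 : d = 0 := by
    rcases mul_eq_zero.1 hBn.symm with h | h
    · exact absurd h hS0
    · exact h
  rw [hd] at hd0
  exact sub_eq_zero.1 hd0
end

section
/- If f ∈ G has compositional order 2 with linear coefficient −1, then f*(z) := (1/2)(z − f(z)) lies in G and conjugates f to ℓ₋₁: f* ∘ f ∘ (f*)⁻¹ = ℓ₋₁, where ℓ₋₁(z) = −z. -/
open PowerSeries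

open Finset

namespace PS
variable {F : Type*} [CommRing F] (f g h A B : PowerSeries F)

theorem coeff_comp (k : ℕ) :
    coeff (R := F) k (comp f g) = ∑ n ∈ range (k + 1), (coeff (R := F) n f) * (coeff (R := F) k (g ^ n)) := by
  simp [comp]

theorem coeff_pow_zero {g : PowerSeries F} (hg : constantCoeff (R := F) g = 0) {k n : ℕ} (h : k < n) :
    coeff (R := F) k (g ^ n) = 0 := by
  have : (X : PowerSeries F) ^ n ∣ g ^ n := pow_dvd_pow_of_dvd (X_dvd_iff.2 hg) n
  exact (X_pow_dvd_iff.1 this) k h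

theorem coeff_comp_of_lt {g : PowerSeries F} (hg : constantCoeff (R := F) g = 0) {k N : ℕ} (h : k < N) :
    coeff (R := F) k (comp f g) = ∑ n ∈ range N, (coeff (R := F) n f) * (coeff (R := F) k (g ^ n)) := by
  rw [coeff_comp]
  refine Finset.sum_subset (Finset.range_subset_range.2 h) ?_
  intro n _ hn
  rw [coeff_pow_zero hg (by simpa using hn), mul_zero]

theorem comp_add : comp (A + B) g = comp A g + comp B g := by
  ext k
  simp [coeff_comp, add_mul, Finset.sum_add_distrib]

theorem comp_sub : comp (A - B) g = comp A g - comp B g := by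
  ext k
  simp [coeff_comp, sub_mul, Finset.sum_sub_distrib]

theorem comp_smul (a : F) : comp (a • A) g = a • comp A g := by
  ext k
  simp [coeff_comp, Finset.mul_sum, mul_assoc]

theorem comp_neg : comp (-A) g = -comp A g := by
  ext k
  simp [coeff_comp, Finset.sum_neg_distrib]

theorem comp_one : comp 1 g = 1 := by
  ext k
  rw [coeff_comp]
  rw [Finset.sum_eq_single 0]
  · simp
  · intro n _ hn
    simp [coeff_one, hn]
  · simp

theorem comp_X_left {g : PowerSeries F} (hg : constantCoeff (R := F) g = 0) : comp X g = g := by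
  ext k
  rw [coeff_comp, Finset.sum_eq_single 1]
  · simp
  · intro n _ hn
    simp [coeff_X, hn]
  · intro h1
    have : k = 0 := by
      by_contra hk
      exact h1 (Finset.mem_range.2 (by omega))
    simp [this, hg]

theorem comp_X_right : comp A X = A := by
  ext k
  rw [coeff_comp, Finset.sum_eq_single k]
  · simp [coeff_X_pow]
  · intro n _ hn
    rw [coeff_X_pow, if_neg (fun h => hn h.symm), mul_zero]
  · intro h; exact absurd (Finset.self_mem_range_succ k) h

theorem constantCoeff_comp : constantCoeff (R := F) (comp f g) = constantCoeff (R := F) f := by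
  have := coeff_comp f g 0
  simpa using this

theorem mul_congr {A A' B B' : PowerSeries F} {k : ℕ}
    (hA : ∀ i ≤ k, coeff (R := F) i A = coeff (R := F) i A') (hB : ∀ i ≤ k, coeff (R := F) i B = coeff (R := F) i B') :
    ∀ j ≤ k, coeff (R := F) j (A * B) = coeff (R := F) j (A' * B') := by
  intro j hj
  rw [coeff_mul, coeff_mul]
  refine Finset.sum_congr rfl ?_
  rintro ⟨p, q⟩ hpq
  rw [Finset.HasAntidiagonal.mem_antidiagonal] at hpq
  rw [hA p (by omega), hB q (by omega)]

theorem pow_congr {A A' : PowerSeries F} {k : ℕ}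
    (hA : ∀ i ≤ k, coeff (R := F) i A = coeff (R := F) i A') :
    ∀ n, ∀ j ≤ k, coeff (R := F) j (A ^ n) = coeff (R := F) j (A' ^ n) := by
  intro n
  induction n with
  | zero => simp
  | succ n ih =>
    intro j hj
    rw [pow_succ, pow_succ]
    exact mul_congr ih hA j hj

theorem comp_mul {g : PowerSeries F} (hg : constantCoeff (R := F) g = 0) (A B : PowerSeries F) :
    comp (A * B) g = comp A g * comp B g := by
  ext k
  set T : ℕ × ℕ → F := fun p => coeff (R := F) p.1 A * coeff (R := F) p.2 B * coeff (R := F) k (g ^ (p.1 + p.2)) with hT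
  have key : ∀ p q : ℕ, p + q = k →
      coeff (R := F) k (g ^ p * g ^ q) = coeff (R := F) k (g ^ (p + q)) := fun p q _ => by rw [← pow_add]
  -- RHS
  have hRHS : coeff (R := F) k (comp A g * comp B g) = ∑ p ∈ range (k+1) ×ˢ range (k+1), T p := by
    rw [coeff_mul]
    have : ∀ pq ∈ antidiagonal k,
        coeff (R := F) pq.1 (comp A g) * coeff (R := F) pq.2 (comp B g)
          = ∑ p ∈ range (k+1) ×ˢ range (k+1),
              (coeff (R := F) p.1 A * coeff (R := F) pq.1 (g ^ p.1)) * (coeff (R := F) p.2 B * coeff (R := F) pq.2 (g ^ p.2)) := by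
      rintro ⟨p, q⟩ hpq
      rw [Finset.HasAntidiagonal.mem_antidiagonal] at hpq
      rw [coeff_comp_of_lt A hg (by omega : p < k+1), coeff_comp_of_lt B hg (by omega : q < k+1),
        Finset.sum_mul_sum, ← Finset.sum_product']
    rw [Finset.sum_congr rfl this, Finset.sum_comm]
    refine Finset.sum_congr rfl ?_
    rintro ⟨i, j⟩ _
    simp only [hT]
    rw [pow_add, coeff_mul, Finset.mul_sum]
    refine Finset.sum_congr rfl ?_
    rintro ⟨p, q⟩ _
    ring
  -- LHS
  have hLHS : coeff (R := F) k (comp (A * B) g) = ∑ p ∈ range (k+1) ×ˢ range (k+1), T p := by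
    rw [coeff_comp]
    have step1 : ∑ n ∈ range (k + 1), coeff (R := F) n (A * B) * coeff (R := F) k (g ^ n)
        = ∑ n ∈ range (k+1), ∑ p ∈ ((range (k+1) ×ˢ range (k+1)).filter
            (fun p => p.1 + p.2 ≤ k)).filter (fun p => p.1 + p.2 = n), T p := by
      refine Finset.sum_congr rfl ?_
      intro n hn
      rw [Finset.mem_range] at hn
      have : ((range (k+1) ×ˢ range (k+1)).filter (fun p => p.1 + p.2 ≤ k)).filter
          (fun p => p.1 + p.2 = n) = antidiagonal n := by
        ext ⟨i, j⟩
        simp only [Finset.mem_filter, Finset.mem_product, Finset.mem_range, Finset.HasAntidiagonal.mem_antidiagonal]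
        omega
      rw [this, coeff_mul, Finset.sum_mul]
      refine Finset.sum_congr rfl ?_
      rintro ⟨i, j⟩ hij
      rw [Finset.HasAntidiagonal.mem_antidiagonal] at hij
      simp only [hT, hij]
    rw [step1, Finset.sum_fiberwise_of_maps_to (fun p hp => ?_)]
    · rw [← Finset.sum_filter_add_sum_filter_not (range (k+1) ×ˢ range (k+1))
        (fun p => p.1 + p.2 ≤ k) T]
      have : ∑ p ∈ (range (k+1) ×ˢ range (k+1)).filter (fun p => ¬ p.1 + p.2 ≤ k), T p = 0 := by
        refine Finset.sum_eq_zero ?_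
        rintro ⟨i, j⟩ hij
        rw [Finset.mem_filter] at hij
        simp only [hT]
        rw [coeff_pow_zero hg (by omega), mul_zero]
      rw [this, add_zero]
    · rw [Finset.mem_filter] at hp
      exact Finset.mem_range.2 (by omega)
  rw [hLHS, hRHS]

theorem comp_pow {h : PowerSeries F} (hh : constantCoeff (R := F) h = 0) (A : PowerSeries F) (n : ℕ) :
    comp (A ^ n) h = (comp A h) ^ n := by
  induction n with
  | zero => simpa using comp_one h
  | succ n ih => rw [pow_succ, comp_mul hh, ih, pow_succ]

theorem comp_zero (g : PowerSeries F) : comp 0 g = 0 := by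
  ext k
  rw [coeff_comp]
  simp

theorem comp_sum {h : PowerSeries F} {ι : Type*} (s : Finset ι) (A : ι → PowerSeries F) :
    comp (∑ i ∈ s, A i) h = ∑ i ∈ s, comp (A i) h := by
  classical
  induction s using Finset.induction_on with
  | empty => simp [comp_zero]
  | @insert _ _ hi ih => rw [Finset.sum_insert hi, Finset.sum_insert hi, comp_add, ih]

theorem comp_assoc {f g h : PowerSeries F} (hg : constantCoeff (R := F) g = 0)
    (hh : constantCoeff (R := F) h = 0) : comp (comp f g) h = comp f (comp g h) := by
  ext k
  have hch : constantCoeff (R := F) (comp g h) = 0 := by rw [constantCoeff_comp]; exact hg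
  set TK : PowerSeries F := ∑ m ∈ range (k+1), coeff (R := F) m f • g ^ m with hTK
  have step1 : coeff (R := F) k (comp (comp f g) h) = coeff (R := F) k (comp TK h) := by
    rw [coeff_comp, coeff_comp]
    refine Finset.sum_congr rfl ?_
    intro n hn
    rw [Finset.mem_range] at hn
    congr 1
    rw [coeff_comp_of_lt f hg (show n < k+1 by omega), hTK, map_sum]
    refine Finset.sum_congr rfl ?_
    intro m _
    rw [LinearMap.map_smul, smul_eq_mul]
  have step2 : comp TK h = ∑ m ∈ range (k+1), coeff (R := F) m f • (comp g h) ^ m := by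
    rw [hTK, comp_sum]
    refine Finset.sum_congr rfl ?_
    intro m _
    rw [comp_smul, comp_pow hh]
  rw [step1, step2, coeff_comp, map_sum]
  refine Finset.sum_congr rfl ?_
  intro m _
  rw [LinearMap.map_smul, smul_eq_mul]

theorem sq_congr {A B : PowerSeries F} (hA0 : constantCoeff (R := F) A = 0)
    (hB0 : constantCoeff (R := F) B = 0) {j : ℕ} (h : ∀ i < j, coeff (R := F) i A = coeff (R := F) i B) :
    ∀ i ≤ j, coeff (R := F) i (A ^ 2) = coeff (R := F) i (B ^ 2) := by
  intro i hi
  rw [sq, coeff_mul, sq, coeff_mul]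
  refine Finset.sum_congr rfl ?_
  rintro ⟨p, q⟩ hpq
  rw [Finset.HasAntidiagonal.mem_antidiagonal] at hpq
  simp only
  rcases Nat.eq_zero_or_pos p with hp | hp
  · subst hp
    rw [coeff_zero_eq_constantCoeff, hA0, hB0]
    simp
  rcases Nat.eq_zero_or_pos q with hq | hq
  · subst hq
    rw [coeff_zero_eq_constantCoeff, hA0, hB0, mul_zero, mul_zero]
  rw [h p (by omega), h q (by omega)]

theorem pow_congr_lt {A B : PowerSeries F} (hA0 : constantCoeff (R := F) A = 0)
    (hB0 : constantCoeff (R := F) B = 0) {j : ℕ} (h : ∀ i < j, coeff (R := F) i A = coeff (R := F) i B) :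
    ∀ n, 2 ≤ n → ∀ i ≤ j, coeff (R := F) i (A ^ n) = coeff (R := F) i (B ^ n) := by
  intro n hn i hi
  obtain ⟨m, rfl⟩ : ∃ m, n = 2 + m := ⟨n - 2, by omega⟩
  rw [pow_add, coeff_mul, pow_add, coeff_mul]
  refine Finset.sum_congr rfl ?_
  rintro ⟨p, q⟩ hpq
  rw [Finset.HasAntidiagonal.mem_antidiagonal] at hpq
  simp only
  rcases Nat.eq_zero_or_pos p with hp | hp
  · subst hp
    have h2 : ∀ C : PowerSeries F, constantCoeff (R := F) C = 0 → coeff (R := F) 0 (C ^ 2) = 0 := by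
      intro C hC
      rw [coeff_zero_eq_constantCoeff, map_pow, hC]
      ring
    rw [h2 A hA0, h2 B hB0, zero_mul, zero_mul]
  · have hq : q < j := by omega
    rw [sq_congr hA0 hB0 h p (by omega),
      pow_congr (fun i' hi' => h i' (by omega)) m q le_rfl]

variable (g : PowerSeries F)

noncomputable def approx : ℕ → PowerSeries F
  | 0 => 0
  | m + 1 => X - comp (g - X) (approx m)

theorem coeff_gX_0 (hg0 : constantCoeff (R := F) g = 0) : constantCoeff (R := F) (g - X) = 0 := by
  simp [hg0]

theorem coeff_gX_1 (hg1 : coeff (R := F) 1 g = 1) : coeff (R := F) 1 (g - X) = 0 := by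
  simp [hg1]

theorem approx_const (hg0 : constantCoeff (R := F) g = 0) (m : ℕ) :
    constantCoeff (R := F) (approx g m) = 0 := by
  cases m with
  | zero => simp [approx]
  | succ m =>
    rw [approx, map_sub, constantCoeff_comp, coeff_gX_0 g hg0]
    simp

theorem approx_stable (hg0 : constantCoeff (R := F) g = 0) (hg1 : coeff (R := F) 1 g = 1) :
    ∀ m, ∀ j ≤ m, coeff (R := F) j (approx g (m + 1)) = coeff (R := F) j (approx g m) := by
  intro m
  induction m with
  | zero =>
    intro j hj
    interval_cases j
    rw [coeff_zero_eq_constantCoeff, approx_const g hg0, approx_const g hg0]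
  | succ m ih =>
    intro j hj
    rw [approx, approx, map_sub, map_sub]
    congr 1
    rw [coeff_comp, coeff_comp]
    refine Finset.sum_congr rfl ?_
    intro n hn
    rcases Nat.lt_or_ge n 2 with h2 | h2
    · interval_cases n
      · rw [coeff_zero_eq_constantCoeff, coeff_gX_0 g hg0, zero_mul, zero_mul]
      · rw [coeff_gX_1 g hg1, zero_mul, zero_mul]
    · congr 1
      rcases Nat.lt_or_ge j (m + 1) with hj' | hj'
      · exact pow_congr (k := j) (fun i hi => ih i (by omega)) n j le_rfl
      · exact pow_congr_lt (approx_const g hg0 (m+1)) (approx_const g hg0 m)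
          (j := j) (fun i hi => ih i (by omega)) n h2 j le_rfl

noncomputable def rinv : PowerSeries F := PowerSeries.mk fun j => coeff (R := F) j (approx g j)

theorem coeff_rinv (hg0 : constantCoeff (R := F) g = 0) (hg1 : coeff (R := F) 1 g = 1) :
    ∀ m, ∀ j ≤ m, coeff (R := F) j (rinv g) = coeff (R := F) j (approx g m) := by
  intro m
  induction m with
  | zero => intro j hj; interval_cases j; simp [rinv]
  | succ m ih =>
    intro j hj
    rcases Nat.lt_or_ge j (m + 1) with hj' | hj'
    · rw [ih j (by omega), ← approx_stable g hg0 hg1 m j (by omega)]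
    · have : j = m + 1 := by omega
      subst this
      simp [rinv, coeff_mk]

theorem rinv_const (hg0 : constantCoeff (R := F) g = 0) (hg1 : coeff (R := F) 1 g = 1) :
    constantCoeff (R := F) (rinv g) = 0 := by
  rw [← coeff_zero_eq_constantCoeff, coeff_rinv g hg0 hg1 0 0 le_rfl,
    coeff_zero_eq_constantCoeff, approx_const g hg0]

theorem comp_rinv (hg0 : constantCoeff (R := F) g = 0) (hg1 : coeff (R := F) 1 g = 1) :
    comp g (rinv g) = X := by
  have hr0 : constantCoeff (R := F) (rinv g) = 0 := rinv_const g hg0 hg1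
  ext k
  have hdecomp : comp g (rinv g) = rinv g + comp (g - X) (rinv g) := by
    have : g = X + (g - X) := by ring
    nth_rewrite 1 [this]
    rw [comp_add, comp_X_left hr0]
  rw [hdecomp, map_add]
  have step : coeff (R := F) k (comp (g - X) (rinv g)) = coeff (R := F) k (comp (g - X) (approx g k)) := by
    rw [coeff_comp, coeff_comp]
    refine Finset.sum_congr rfl ?_
    intro n _
    rw [pow_congr (fun i hi => coeff_rinv g hg0 hg1 k i hi) n k le_rfl]
  rw [step]
  have : comp (g - X) (approx g k) = X - approx g (k + 1) := by
    rw [approx]; ring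
  rw [this, map_sub, coeff_rinv g hg0 hg1 (k+1) k (by omega)]
  ring

theorem rinv_coeff_one (hg0 : constantCoeff (R := F) g = 0) (hg1 : coeff (R := F) 1 g = 1) :
    coeff (R := F) 1 (rinv g) = 1 := by
  have h := comp_rinv g hg0 hg1
  have := congrArg (coeff (R := F) 1) h
  rw [coeff_comp] at this
  rw [show (1:ℕ) + 1 = 2 from rfl, Finset.sum_range_succ, Finset.sum_range_one] at this
  rw [pow_zero, pow_one, coeff_one, hg1, one_mul] at this
  simpa [hg0] using this

theorem exists_inv (hg0 : constantCoeff (R := F) g = 0) (hg1 : coeff (R := F) 1 g = 1) :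
    ∃ r : PowerSeries F, constantCoeff (R := F) r = 0 ∧ coeff (R := F) 1 r = 1 ∧
      comp g r = X ∧ comp r g = X := by
  refine ⟨rinv g, rinv_const g hg0 hg1, rinv_coeff_one g hg0 hg1, comp_rinv g hg0 hg1, ?_⟩
  set r := rinv g
  have hr0 : constantCoeff (R := F) r = 0 := rinv_const g hg0 hg1
  have hr1 : coeff (R := F) 1 r = 1 := rinv_coeff_one g hg0 hg1
  have hrr : comp r (rinv r) = X := comp_rinv r hr0 hr1
  have hr'0 : constantCoeff (R := F) (rinv r) = 0 := rinv_const r hr0 hr1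
  have : rinv r = g := by
    calc rinv r = comp X (rinv r) := (comp_X_left hr'0).symm
    _ = comp (comp g r) (rinv r) := by rw [comp_rinv g hg0 hg1]
    _ = comp g (comp r (rinv r)) := comp_assoc hr0 hr'0
    _ = comp g X := by rw [hrr]
    _ = g := comp_X_right g
  rw [← this, hrr]

end PS

theorem stmt_16 (F : Type*) [Field F] [CharZero F] (f : PowerSeries F) (hf : f ∈ PS.G F)
    (hord : PS.HasOrder f 2) (h1 : PowerSeries.coeff (R := F) 1 f = -1)
    (fstar : PowerSeries F) (hstar : fstar = (2 : F)⁻¹ • (PowerSeries.X - f)) :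
    fstar ∈ PS.G F ∧
    ∃ finv ∈ PS.G F, PS.comp fstar finv = PowerSeries.X ∧
      PS.comp finv fstar = PowerSeries.X ∧
      PS.comp (PS.comp fstar f) finv = PowerSeries.C (R := F) (-1) * PowerSeries.X := by
  obtain ⟨hf0, hf1⟩ := hf
  have h2 : (2 : F) ≠ 0 := two_ne_zero
  have hs0 : PowerSeries.constantCoeff (R := F) fstar = 0 := by
    rw [← PowerSeries.coeff_zero_eq_constantCoeff_apply, hstar, map_smul, map_sub,
      PowerSeries.coeff_zero_eq_constantCoeff_apply, PowerSeries.coeff_zero_eq_constantCoeff_apply,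
      PowerSeries.constantCoeff_X, hf0]
    simp
  have hs1 : PowerSeries.coeff (R := F) 1 fstar = 1 := by
    have : PowerSeries.coeff (R := F) 1 fstar = (2 : F)⁻¹ * 2 := by
      rw [hstar, map_smul, map_sub, PowerSeries.coeff_one_X, h1, smul_eq_mul]
      norm_num
    rw [this, inv_mul_cancel₀ h2]
  refine ⟨⟨hs0, by rw [hs1]; exact one_ne_zero⟩, ?_⟩
  obtain ⟨r, hr0, hr1, hgr, hrg⟩ := PS.exists_inv fstar hs0 hs1
  refine ⟨r, ⟨hr0, by rw [hr1]; exact one_ne_zero⟩, hgr, hrg, ?_⟩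
  have hff : PS.comp f f = PowerSeries.X := by
    have h2' : PS.iter f 2 = PS.comp f f := by
      show PS.comp f (PS.comp f (PS.iter f 0)) = _
      rw [show PS.iter f 0 = PowerSeries.X from rfl, PS.comp_X_right]
    rw [← h2', hord.1]
  have hkey : PS.comp fstar f = -fstar := by
    rw [hstar, PS.comp_smul, PS.comp_sub, PS.comp_X_left hf0, hff, ← smul_neg, neg_sub]
  rw [hkey, PS.comp_neg, hgr, map_neg, map_one, neg_mul, one_mul]
end
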